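/- Let n, k, l be natural numbers and let f : Fin(n+1) → Fin(k+1) and g : Fin(n+1) → Fin(l+1) be surjective monotone maps. Then there exist a natural number p and a surjective monotone map h : Fin(n+1) → Fin(p+1) such that both f and g factor through h (i.e. f = f' ∘ h and g = g' ∘ h for monotone maps f', g'), and h is universal with this property: any surjective monotone map h' : Fin(n+1) → Fin(q+1) through which both f and g factor itself factors through h. -/

import Mathlib

open Function

/-- Any two surjective monotone maps out of `Fin (n+1)` admit a minimal common quotient:
a surjective monotone map `h` through which both factor, such that `h` factors through any
other surjective monotone map through which both factor. -/
theorem stmt13 (n k l : ℕ) (f : Fin (n + 1) →o Fin (k + 1)) (g : Fin (n + 1) →o Fin (l + 1))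
    (hf : Function.Surjective f) (hg : Function.Surjective g) :
    ∃ (p : ℕ) (h : Fin (n + 1) →o Fin (p + 1)),
      Function.Surjective h ∧
      (∃ f' : Fin (p + 1) →o Fin (k + 1), f = f'.comp h) ∧
      (∃ g' : Fin (p + 1) →o Fin (l + 1), g = g'.comp h) ∧
      ∀ (q : ℕ) (h' : Fin (n + 1) →o Fin (q + 1)), Function.Surjective h' →
        (∃ f'' : Fin (q + 1) →o Fin (k + 1), f = f''.comp h') →
        (∃ g'' : Fin (q + 1) →o Fin (l + 1), g = g''.comp h') →
        ∃ u : Fin (q + 1) →o Fin (p + 1), h = u.comp h' := by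
  classical
  set F : Fin (n + 1) → Lex (Fin (k+1) × Fin (l+1)) := fun x => toLex (f x, g x) with hF
  have Fmono : Monotone F := fun x y hxy =>
    Prod.Lex.toLex_mono ⟨f.mono hxy, g.mono hxy⟩
  set s : Finset (Lex (Fin (k+1) × Fin (l+1))) := Finset.image F Finset.univ with hs
  have hmem : ∀ x, F x ∈ s := fun x => Finset.mem_image_of_mem F (Finset.mem_univ x)
  have hcard : s.card = (s.card - 1) + 1 := by
    have : 0 < s.card := Finset.card_pos.mpr ⟨F 0, hmem 0⟩
    omega
  set e := s.orderIsoOfFin hcard with he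
  refine ⟨s.card - 1, ⟨fun x => e.symm ⟨F x, hmem x⟩,
    fun x y hxy => e.symm.monotone (Subtype.mk_le_mk.mpr (Fmono hxy))⟩, ?_, ?_, ?_, ?_⟩
  · intro t
    obtain ⟨x, -, hx⟩ := Finset.mem_image.mp (e t).2
    refine ⟨x, ?_⟩
    have hxt : (⟨F x, hmem x⟩ : {a // a ∈ s}) = e t := Subtype.ext hx
    show e.symm ⟨F x, hmem x⟩ = t
    rw [hxt]; exact e.symm_apply_apply t
  · refine ⟨⟨fun t => (ofLex (e t).1).1, ?_⟩, ?_⟩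
    · intro t t' htt'
      have h1 : (e t : Lex (Fin (k+1) × Fin (l+1))) ≤ e t' := e.monotone htt'
      rcases Prod.Lex.le_iff.mp h1 with hlt | ⟨heq, -⟩
      · exact hlt.le
      · exact heq.le
    · ext x
      simp only [OrderHom.comp_coe, OrderHom.coe_mk, Function.comp_apply]
      show (f x : ℕ) = ((ofLex (e (e.symm ⟨F x, hmem x⟩)).1).1 : ℕ)
      rw [e.apply_symm_apply]
      rfl
  · refine ⟨⟨fun t => (ofLex (e t).1).2, ?_⟩, ?_⟩
    · intro t t' htt'
      obtain ⟨x, -, hx⟩ := Finset.mem_image.mp (e t).2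
      obtain ⟨y, -, hy⟩ := Finset.mem_image.mp (e t').2
      have hle : F x ≤ F y := by
        rw [hx, hy]; exact Subtype.coe_le_coe.mpr (e.monotone htt')
      rcases le_total x y with hxy | hxy
      · have := g.mono hxy
        simp only [← hx, ← hy]
        exact this
      · have hFeq : F x = F y := le_antisymm hle (Fmono hxy)
        simp only [← hx, ← hy, hFeq, le_refl]
    · ext x
      simp only [OrderHom.comp_coe, OrderHom.coe_mk, Function.comp_apply]
      show (g x : ℕ) = ((ofLex (e (e.symm ⟨F x, hmem x⟩)).1).2 : ℕ)
      rw [e.apply_symm_apply]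
      rfl
  · rintro q h' hsurj ⟨f'', hf''⟩ ⟨g'', hg''⟩
    have hFh' : ∀ x, F x = toLex (f'' (h' x), g'' (h' x)) := by
      intro x
      simp [hF, hf'', hg'']
    refine ⟨⟨fun t => e.symm ⟨F (surjInv hsurj t), hmem _⟩, ?_⟩, ?_⟩
    · intro t t' htt'
      apply e.symm.monotone
      apply Subtype.mk_le_mk.mpr
      rw [hFh', hFh']
      simp only [surjInv_eq hsurj]
      exact Prod.Lex.toLex_mono ⟨f''.mono htt', g''.mono htt'⟩
    · ext x
      simp only [OrderHom.comp_coe, OrderHom.coe_mk, Function.comp_apply]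
      have hx2 : F x = F (surjInv hsurj (h' x)) := by
        rw [hFh', hFh', surjInv_eq hsurj]
      show ((e.symm ⟨F x, hmem x⟩ : Fin (s.card - 1 + 1)) : ℕ) = ((e.symm ⟨F (surjInv hsurj (h' x)), hmem _⟩ : Fin (s.card - 1 + 1)) : ℕ)
      exact congrArg _ (congrArg _ (Subtype.ext hx2))
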